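/- Let B³ ⊂ ℝ³ be the closed unit ball, let L = {(x,y,z) ∈ B³ : x² + y² ≤ 1/4}, and let q₃ : B³ → ℝP³ be the quotient map identifying antipodal points of ∂B³. Then the image R = q₃(L) is a solid torus, i.e. R is homeomorphic to S¹ × B². -/

import Mathlib

noncomputable section
open Metric Set

open Metric Set

abbrev USphere (n : ℕ) : Type :=
  (sphere (0 : EuclideanSpace ℝ (Fin (n+1))) 1 : Set (EuclideanSpace ℝ (Fin (n+1))))

def antipodalSetoid (n : ℕ) : Setoid (USphere n) where
  r x y := (x : EuclideanSpace ℝ (Fin (n+1))) = (y : EuclideanSpace ℝ (Fin (n+1)))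
    ∨ (x : EuclideanSpace ℝ (Fin (n+1))) = -(y : EuclideanSpace ℝ (Fin (n+1)))
  iseqv := by
    constructor
    · intro x; exact Or.inl rfl
    · rintro x y (h | h)
      · exact Or.inl h.symm
      · right; rw [h]; simp
    · rintro x y z (h1 | h1) (h2 | h2)
      · exact Or.inl (h1.trans h2)
      · right; rw [h1, h2]
      · right; rw [h1, h2]
      · left; rw [h1, h2]; simp

def RP (n : ℕ) : Type := Quotient (antipodalSetoid n)

instance (n : ℕ) : TopologicalSpace (RP n) := by unfold RP; infer_instance

/-- `K` is an absolute extensor of `X`: every continuous map into `K` defined on a closed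
subset of `X` extends to a continuous map on all of `X`. -/
def IsAbsoluteExtensor (X : Type*) [TopologicalSpace X] (K : Type*) [TopologicalSpace K] : Prop :=
  ∀ A : Set X, IsClosed A → ∀ f : C(A, K), ∃ g : C(X, K), ∀ a : A, g a = f a

/-- The covering projection from the sphere to projective space. -/
def pcov (n : ℕ) : USphere n → RP n := fun z => Quotient.mk (antipodalSetoid n) z

def coordIncl (n : ℕ) (x : EuclideanSpace ℝ (Fin (n+1))) : EuclideanSpace ℝ (Fin (n+2)) :=
  WithLp.toLp 2 (fun i : Fin (n+2) => if h : (i : ℕ) < n + 1 then x ⟨i, h⟩ else 0)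

lemma coordIncl_mem (n : ℕ) (x : USphere n) :
    coordIncl n (x : EuclideanSpace ℝ (Fin (n+1))) ∈
      sphere (0 : EuclideanSpace ℝ (Fin (n+2))) 1 := by
  obtain ⟨x, hx⟩ := x
  rw [mem_sphere_iff_norm, sub_zero, EuclideanSpace.norm_eq] at hx ⊢
  have h2 : ∑ i : Fin (n+2), ‖coordIncl n x i‖ ^ 2 = ∑ i : Fin (n+1), ‖x i‖ ^ 2 := by
    rw [Fin.sum_univ_castSucc]
    simp [coordIncl, Fin.is_lt, Fin.is_le]
  rw [h2]; exact hx

lemma coordIncl_neg (n : ℕ) (x : EuclideanSpace ℝ (Fin (n+1))) :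
    coordIncl n (-x) = -(coordIncl n x) := by
  ext i
  by_cases h : (i : ℕ) < n + 1 <;> simp [coordIncl, h] <;> split_ifs <;> simp

/-- The equatorial inclusion of spheres. -/
def sphereIncl (n : ℕ) : USphere n → USphere (n+1) :=
  fun x => ⟨coordIncl n (x : EuclideanSpace ℝ (Fin (n+1))), coordIncl_mem n x⟩

/-- The standard (equatorial) inclusion `ℝPⁿ → ℝP^(n+1)`. -/
def rpIncl (n : ℕ) : RP n → RP (n+1) :=
  Quotient.map' (sphereIncl n) (by
    rintro x y (h | h)
    · left; show coordIncl n _ = coordIncl n _; rw [h]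
    · right
      show coordIncl n (x : EuclideanSpace ℝ (Fin (n+1))) = -(coordIncl n _)
      rw [h, coordIncl_neg])
open Metric Set

/-- The real Hilbert space ℓ². -/
abbrev Hilbertl2 : Type := lp (fun _ : ℕ => ℝ) 2

def antipodalSetoidInf : Setoid (sphere (0 : Hilbertl2) 1 : Set Hilbertl2) where
  r x y := (x : Hilbertl2) = (y : Hilbertl2) ∨ (x : Hilbertl2) = -(y : Hilbertl2)
  iseqv := by
    constructor
    · intro x; exact Or.inl rfl
    · rintro x y (h | h)
      · exact Or.inl h.symm
      · right; rw [h]; simp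
    · rintro x y z (h1 | h1) (h2 | h2)
      · exact Or.inl (h1.trans h2)
      · right; rw [h1, h2]
      · right; rw [h1, h2]
      · left; rw [h1, h2]; simp

/-- Infinite real projective space: the quotient of the unit sphere of ℓ² by the
antipodal identification. -/
def RPInf : Type := Quotient antipodalSetoidInf

instance : TopologicalSpace RPInf := by unfold RPInf; infer_instance
abbrev UBall3 : Type := (closedBall (0 : EuclideanSpace ℝ (Fin 3)) 1 : Set (EuclideanSpace ℝ (Fin 3)))

def hemiLift (x : EuclideanSpace ℝ (Fin 3)) : EuclideanSpace ℝ (Fin 4) :=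
  WithLp.toLp 2 (fun i : Fin 4 => if h : (i : ℕ) < 3 then x ⟨i, h⟩ else Real.sqrt (1 - ‖x‖ ^ 2))

lemma hemiLift_mem (x : UBall3) :
    hemiLift (x : EuclideanSpace ℝ (Fin 3)) ∈ sphere (0 : EuclideanSpace ℝ (Fin 4)) 1 := by
  obtain ⟨x, hx⟩ := x
  rw [mem_closedBall, dist_zero_right] at hx
  have hx2 : ‖x‖ ^ 2 ≤ 1 := by nlinarith [norm_nonneg x]
  have hsum : ∑ i : Fin 3, ‖x i‖ ^ 2 = ‖x‖ ^ 2 := by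
    rw [EuclideanSpace.norm_eq, Real.sq_sqrt]
    positivity
  rw [mem_sphere_iff_norm, sub_zero, EuclideanSpace.norm_eq]
  have h2 : ∑ i : Fin 4, ‖hemiLift x i‖ ^ 2 = 1 := by
    rw [Fin.sum_univ_castSucc]
    have hlast : ‖hemiLift x (Fin.last 3)‖ ^ 2 = 1 - ‖x‖ ^ 2 := by
      simp only [hemiLift, Fin.last, PiLp.toLp_apply]
      rw [dif_neg (by norm_num)]
      rw [Real.norm_eq_abs, sq_abs, Real.sq_sqrt (by linarith)]
    have hcast : ∀ i : Fin 3, ‖hemiLift x (Fin.castSucc i)‖ ^ 2 = ‖x i‖ ^ 2 := by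
      intro i
      simp only [hemiLift, PiLp.toLp_apply]
      rw [dif_pos (by exact i.is_lt)]
      congr 1
    rw [hlast]
    rw [Finset.sum_congr rfl (fun i _ => hcast i), hsum]
    ring
  rw [h2, Real.sqrt_one]

/-- The quotient map `q₃ : B³ → ℝP³` (identify `B³` with the upper hemisphere of `S³`). -/
def q3 : UBall3 → RP 3 := fun x => pcov 3 ⟨hemiLift (x : EuclideanSpace ℝ (Fin 3)), hemiLift_mem x⟩

/-! ### The first modification of ℝP³ -/

/-- The disk of radius 1/3 (the meridian disk `D`). -/
abbrev DiskThird : Type :=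
  (closedBall (0 : EuclideanSpace ℝ (Fin 2)) (1/3) : Set (EuclideanSpace ℝ (Fin 2)))

/-- The parametrization of the solid torus `L ⊂ B³`, obtained by rotating the disk `D`
(of radius 1/3, centered at `(0,1/2,0)` in the yz-plane) about the z-axis. -/
def LparamE (s : USphere 1) (d : EuclideanSpace ℝ (Fin 2)) : EuclideanSpace ℝ (Fin 3) :=
  WithLp.toLp 2 (fun i : Fin 3 =>
    if i = 0 then -((s : EuclideanSpace ℝ (Fin 2)) 1) * (1/2 + d 0)
    else if i = 1 then ((s : EuclideanSpace ℝ (Fin 2)) 0) * (1/2 + d 0)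
    else d 1)

lemma circle_sq_sum (s : USphere 1) :
    ((s : EuclideanSpace ℝ (Fin 2)) 0) ^ 2 + ((s : EuclideanSpace ℝ (Fin 2)) 1) ^ 2 = 1 := by
  obtain ⟨s, hs⟩ := s
  rw [mem_sphere_iff_norm, sub_zero, EuclideanSpace.norm_eq] at hs
  have h0 : (0:ℝ) ≤ ∑ i : Fin 2, ‖s i‖ ^ 2 := by positivity
  have := Real.sq_sqrt h0
  rw [hs] at this
  rw [Fin.sum_univ_two] at this
  simpa [Real.norm_eq_abs, sq_abs] using this.symm

lemma disk_sq_sum (d : EuclideanSpace ℝ (Fin 2)) (hd : d ∈ closedBall (0 : EuclideanSpace ℝ (Fin 2)) (1/3)) :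
    (d 0) ^ 2 + (d 1) ^ 2 ≤ 1/9 := by
  rw [mem_closedBall, dist_zero_right, EuclideanSpace.norm_eq] at hd
  have h0 : (0:ℝ) ≤ ∑ i : Fin 2, ‖d i‖ ^ 2 := by positivity
  have h1 := Real.sq_sqrt h0
  have h2 : (∑ i : Fin 2, ‖d i‖ ^ 2) ≤ 1/9 := by
    nlinarith [Real.sqrt_nonneg (∑ i : Fin 2, ‖d i‖ ^ 2)]
  rw [Fin.sum_univ_two] at h2
  simpa [Real.norm_eq_abs, sq_abs] using h2

lemma LparamE_normsq (s : USphere 1) (d : EuclideanSpace ℝ (Fin 2))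
    (hd : d ∈ closedBall (0 : EuclideanSpace ℝ (Fin 2)) (1/3)) :
    ‖LparamE s d‖ ^ 2 ≤ 7/10 := by
  have hs := circle_sq_sum s
  have hdd := disk_sq_sum d hd
  have hd0 : (d 0) ^ 2 ≤ 1/9 := by nlinarith [sq_nonneg (d 1)]
  have hd0' : d 0 ≤ 1/3 := by nlinarith
  rw [EuclideanSpace.norm_eq, Real.sq_sqrt (by positivity)]
  rw [Fin.sum_univ_three]
  simp only [LparamE]
  norm_num [Fin.ext_iff]
  simp only [Real.norm_eq_abs, mul_pow, sq_abs]
  have key : ((s : EuclideanSpace ℝ (Fin 2)) 1) ^ 2 * (1/2 + d 0) ^ 2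
      + ((s : EuclideanSpace ℝ (Fin 2)) 0) ^ 2 * (1/2 + d 0) ^ 2 = (1/2 + d 0) ^ 2 := by
    linear_combination (1/2 + d 0) ^ 2 * hs
  nlinarith [sq_nonneg (d 1), sq_nonneg (1/2 + d 0)]

lemma LparamE_mem (s : USphere 1) (d : EuclideanSpace ℝ (Fin 2))
    (hd : d ∈ closedBall (0 : EuclideanSpace ℝ (Fin 2)) (1/3)) :
    LparamE s d ∈ closedBall (0 : EuclideanSpace ℝ (Fin 3)) 1 := by
  rw [mem_closedBall, dist_zero_right]
  have h := LparamE_normsq s d hd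
  nlinarith [norm_nonneg (LparamE s d)]

/-- The solid torus `L`, viewed as a subset of `ℝP³` (it misses the boundary sphere). -/
def LsetRP : Set (RP 3) :=
  {p | ∃ (s : USphere 1) (d : EuclideanSpace ℝ (Fin 2))
    (hd : d ∈ closedBall (0 : EuclideanSpace ℝ (Fin 2)) (1/3)),
      q3 ⟨LparamE s d, LparamE_mem s d hd⟩ = p}

/-- The point of the boundary circle `∂D` corresponding to `z ∈ S¹` under the standard
identification `ℝP¹ ≅ ∂D` (via the squaring map on the circle). -/
def bdPtE (z : USphere 1) : EuclideanSpace ℝ (Fin 2) :=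
  WithLp.toLp 2 (fun i : Fin 2 =>
    if i = 0 then (((z : EuclideanSpace ℝ (Fin 2)) 0) ^ 2 - ((z : EuclideanSpace ℝ (Fin 2)) 1) ^ 2) / 3
    else (2 * ((z : EuclideanSpace ℝ (Fin 2)) 0) * ((z : EuclideanSpace ℝ (Fin 2)) 1)) / 3)

lemma bdPtE_mem (z : USphere 1) : bdPtE z ∈ closedBall (0 : EuclideanSpace ℝ (Fin 2)) (1/3) := by
  have hz := circle_sq_sum z
  rw [mem_closedBall, dist_zero_right, EuclideanSpace.norm_eq]
  have h1 : ∑ i : Fin 2, ‖bdPtE z i‖ ^ 2 = (1/3 : ℝ) ^ 2 := by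
    rw [Fin.sum_univ_two]
    simp only [bdPtE]
    norm_num [Fin.ext_iff]
    simp only [div_pow, mul_pow, sq_abs]
    linear_combination ((((z : EuclideanSpace ℝ (Fin 2)) 0) ^ 2 + ((z : EuclideanSpace ℝ (Fin 2)) 1) ^ 2 + 1) / 9) * hz
  rw [h1, Real.sqrt_sq (by norm_num)]

lemma bdPtE_neg (z w : USphere 1)
    (h : (z : EuclideanSpace ℝ (Fin 2)) = -(w : EuclideanSpace ℝ (Fin 2))) :
    bdPtE z = bdPtE w := by
  ext i
  have h0 : (z : EuclideanSpace ℝ (Fin 2)) 0 = -((w : EuclideanSpace ℝ (Fin 2)) 0) := by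
    rw [h]; first | rfl | simp
  have h1 : (z : EuclideanSpace ℝ (Fin 2)) 1 = -((w : EuclideanSpace ℝ (Fin 2)) 1) := by
    rw [h]; first | rfl | simp
  simp only [bdPtE, h0, h1, PiLp.toLp_apply]
  ring_nf

/-- The attaching map `S¹ × ℝP¹ → ℝP³` onto the boundary `∂L` of the solid torus,
using the identification of `ℝP¹` with `∂D`. -/
def attachM1 (s : USphere 1) : RP 1 → RP 3 :=
  Quotient.lift (fun z : USphere 1 => q3 ⟨LparamE s (bdPtE z), LparamE_mem s (bdPtE z) (bdPtE_mem z)⟩)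
    (by
      rintro z w (h | h)
      · have : z = w := Subtype.ext h
        rw [this]
      · have : bdPtE z = bdPtE w := bdPtE_neg z w h
        simp only [this])

/-- The underlying type of the first modification `M₁` of `ℝP³`: the disjoint union of
`ℝP³` minus the interior of the solid torus `L` and of `S¹ × ℝP²`. -/
abbrev M1Carrier : Type := {p : RP 3 // p ∉ interior LsetRP} ⊕ (USphere 1 × RP 2)

/-- The gluing relation for the first modification: a boundary point `attachM1 s c ∈ ∂L`
is identified with the point `(s, c) ∈ S¹ × ℝP¹ ⊂ S¹ × ℝP²`. -/
def M1Rel : M1Carrier → M1Carrier → Prop := fun p q =>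
  ∃ (s : USphere 1) (c : RP 1) (h : attachM1 s c ∉ interior LsetRP),
    p = Sum.inl ⟨attachM1 s c, h⟩ ∧ q = Sum.inr (s, rpIncl 1 c)

/-- The first modification `M₁` of `ℝP³`: remove the interior of the solid torus `L` and
attach `S¹ × ℝP²` via the map `S¹ × ℝP¹ → ∂L`. -/
def M1 : Type := Quot M1Rel

instance : TopologicalSpace M1 := by unfold M1; infer_instance

lemma rpIncl_not_mem_LsetRP (c : RP 2) : rpIncl 2 c ∉ LsetRP := by
  rintro ⟨s, d, hd, heq⟩
  obtain ⟨y, rfl⟩ := Quotient.exists_rep c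
  have hmk : rpIncl 2 (Quotient.mk (antipodalSetoid 2) y)
      = Quotient.mk (antipodalSetoid 3) (sphereIncl 2 y) := rfl
  rw [hmk] at heq
  have heq' := Quotient.exact heq
  have hpos : 0 < Real.sqrt (1 - ‖LparamE s d‖ ^ 2) := by
    apply Real.sqrt_pos.mpr
    have := LparamE_normsq s d hd
    linarith
  have hlift3 : hemiLift (LparamE s d) 3 = Real.sqrt (1 - ‖LparamE s d‖ ^ 2) := by
    simp only [hemiLift, PiLp.toLp_apply]
    rw [dif_neg (by decide)]
  have hincl3 : (sphereIncl 2 y : EuclideanSpace ℝ (Fin 4)) 3 = 0 := by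
    show coordIncl 2 (y : EuclideanSpace ℝ (Fin 3)) 3 = 0
    simp only [coordIncl, PiLp.toLp_apply]
    rw [dif_neg (by decide)]
  rcases heq' with h | h
  · have h3' : hemiLift (LparamE s d) 3 = (sphereIncl 2 y : EuclideanSpace ℝ (Fin 4)) 3 :=
      congrFun (congrArg WithLp.ofLp h) (3 : Fin 4)
    rw [hlift3, hincl3] at h3'
    linarith
  · have h3' : hemiLift (LparamE s d) 3 = -((sphereIncl 2 y : EuclideanSpace ℝ (Fin 4)) 3) :=
      by simpa using congrArg (fun v : EuclideanSpace ℝ (Fin 4) => v 3) h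
    rw [hlift3, hincl3, neg_zero] at h3'
    linarith

lemma rpIncl_not_mem_interior_LsetRP (c : RP 2) : rpIncl 2 c ∉ interior LsetRP :=
  fun h => rpIncl_not_mem_LsetRP c (interior_subset h)

/-- The copy of the projective plane `ℝP² = q₃(∂B³)` inside the first modification `M₁`. -/
def rp2ToM1 : RP 2 → M1 :=
  fun c => Quot.mk M1Rel (Sum.inl ⟨rpIncl 2 c, rpIncl_not_mem_interior_LsetRP c⟩)

/-! ### The second modification of ℝP³ -/

/-- The solid torus `R = q₃(L) ⊂ ℝP³`, where `L ⊂ B³` is the cylinder `x² + y² ≤ 1/4`. -/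
def RsetRP : Set (RP 3) :=
  {p | ∃ x : UBall3, ((x : EuclideanSpace ℝ (Fin 3)) 0) ^ 2 + ((x : EuclideanSpace ℝ (Fin 3)) 1) ^ 2 ≤ 1/4
        ∧ q3 x = p}

/-- The copy of `ℝP² = q₃(∂B³)` inside `ℝP³`. -/
def RP2in3 : Set (RP 3) := Set.range (rpIncl 2)

/-- The disk `D = R ∩ ℝP²`. -/
def DsetM2 : Set (RP 3) := RsetRP ∩ RP2in3

/-- The boundary circle `∂D = D ∩ ∂R` of the disk `D`. -/
def bdDM2 : Set (RP 3) := DsetM2 ∩ frontier RsetRP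

/-- The subspace `T = S¹ × ℝP² ∪ {a} × ℝP³` of `S¹ × ℝP³`. -/
def TSpace (a : USphere 1) : Type :=
  {p : USphere 1 × RP 3 // (∃ c : RP 2, p.2 = rpIncl 2 c) ∨ p.1 = a}

instance (a : USphere 1) : TopologicalSpace (TSpace a) := by unfold TSpace; infer_instance

/-- The projection `π : T → S¹` onto the first coordinate. -/
def TProj (a : USphere 1) : C(TSpace a, USphere 1) :=
  ⟨fun p => p.val.1, by exact (continuous_fst.comp continuous_subtype_val)⟩

/-- The underlying type of the second modification `M₂` of `ℝP³`. -/
abbrev M2Carrier (a : USphere 1) : Type := {p : RP 3 // p ∉ interior RsetRP} ⊕ (TSpace a)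

/-- The gluing relation for the second modification, relative to a solid-torus structure
`φ : S¹ × D ≃ₜ R` on `R` and an identification `ψ : ∂D ≃ₜ ℝP¹`: a point `φ(s,d) ∈ ∂R` is
identified with the point `(s, ψ d) ∈ S¹ × ℝP¹ ⊂ S¹ × ℝP² ⊂ T`. -/
def M2Rel (a : USphere 1) (φ : (USphere 1 × ↥DsetM2) ≃ₜ ↥RsetRP) (ψ : ↥bdDM2 ≃ₜ RP 1) :
    M2Carrier a → M2Carrier a → Prop := fun p q =>
  ∃ (s : USphere 1) (d : ↥bdDM2) (h : (φ (s, ⟨d.val, d.prop.1⟩)).val ∉ interior RsetRP),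
    p = Sum.inl ⟨(φ (s, ⟨d.val, d.prop.1⟩)).val, h⟩ ∧
    q = Sum.inr ⟨(s, rpIncl 2 (rpIncl 1 (ψ d))), Or.inl ⟨rpIncl 1 (ψ d), rfl⟩⟩

/-- The second modification `M₂` of `ℝP³`: remove the interior of the solid torus `R` and
attach `S¹ × ℝP² ∪ {a} × ℝP³` via the inclusion `∂R = S¹ × ∂D → S¹ × ℝP² ∪ {a} × ℝP³`. -/
def M2 (a : USphere 1) (φ : (USphere 1 × ↥DsetM2) ≃ₜ ↥RsetRP) (ψ : ↥bdDM2 ≃ₜ RP 1) : Type :=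
  Quot (M2Rel a φ ψ)

instance (a : USphere 1) (φ : (USphere 1 × ↥DsetM2) ≃ₜ ↥RsetRP) (ψ : ↥bdDM2 ≃ₜ RP 1) :
    TopologicalSpace (M2 a φ ψ) := by unfold M2; infer_instance

namespace ST
open Real

abbrev E2 := EuclideanSpace ℝ (Fin 2)
abbrev E3 := EuclideanSpace ℝ (Fin 3)
abbrev E4 := EuclideanSpace ℝ (Fin 4)

lemma normsq2 (x : E2) : ‖x‖^2 = (x 0)^2 + (x 1)^2 := by
  rw [EuclideanSpace.norm_eq, Real.sq_sqrt (by positivity), Fin.sum_univ_two]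
  simp [sq_abs]

lemma normsq3 (x : E3) : ‖x‖^2 = (x 0)^2 + (x 1)^2 + (x 2)^2 := by
  rw [EuclideanSpace.norm_eq, Real.sq_sqrt (by positivity), Fin.sum_univ_three]
  simp [sq_abs]

def mk2 (a b : ℝ) : E2 := WithLp.toLp 2 (fun i : Fin 2 => if i = 0 then a else b)
def mk3 (a b c : ℝ) : E3 := WithLp.toLp 2 (fun i : Fin 3 => if i = 0 then a else if i = 1 then b else c)

@[simp] lemma mk2_0 (a b : ℝ) : mk2 a b 0 = a := rfl
@[simp] lemma mk2_1 (a b : ℝ) : mk2 a b 1 = b := rfl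
@[simp] lemma mk3_0 (a b c : ℝ) : mk3 a b c 0 = a := rfl
@[simp] lemma mk3_1 (a b c : ℝ) : mk3 a b c 1 = b := rfl
@[simp] lemma mk3_2 (a b c : ℝ) : mk3 a b c 2 = c := rfl

lemma mk2_eta (x : E2) : mk2 (x 0) (x 1) = x := by
  ext i; fin_cases i <;> rfl

lemma continuous_mk2 {X : Type*} [TopologicalSpace X] {f g : X → ℝ}
    (hf : Continuous f) (hg : Continuous g) : Continuous (fun x => mk2 (f x) (g x)) := by
  have : Continuous (fun x => WithLp.toLp 2 (fun i : Fin 2 => if i = 0 then f x else g x)) := by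
    apply (PiLp.continuous_toLp (p := 2) (β := fun _ : Fin 2 => ℝ)).comp
    apply continuous_pi
    intro i
    by_cases h : i = 0 <;> simp [mk2, h, hf, hg]
  exact this

lemma continuous_apply_E3 (i : Fin 3) : Continuous (fun x : E3 => x i) :=
  (continuous_apply i).comp (PiLp.continuous_ofLp (p := 2) (β := fun _ : Fin 3 => ℝ))

lemma continuous_apply_E4 (i : Fin 4) : Continuous (fun x : E4 => x i) :=
  (continuous_apply i).comp (PiLp.continuous_ofLp (p := 2) (β := fun _ : Fin 4 => ℝ))

/-! ### Hausdorffness of RP 3 -/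

def outerF (x : USphere 3) : Fin 4 → Fin 4 → ℝ := fun i j => (x : E4) i * (x : E4) j

lemma continuous_outerF : Continuous outerF := by
  apply continuous_pi; intro i; apply continuous_pi; intro j
  exact ((continuous_apply_E4 i).comp continuous_subtype_val).mul
    ((continuous_apply_E4 j).comp continuous_subtype_val)

def outerQ : RP 3 → (Fin 4 → Fin 4 → ℝ) :=
  Quotient.lift outerF (by
    rintro x y (h | h) <;> funext i j <;> simp only [outerF, h]
    simp only [PiLp.neg_apply]
    ring)

lemma outerQ_injective : Function.Injective outerQ := by
  intro a b h
  obtain ⟨x, rfl⟩ := Quotient.exists_rep a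
  obtain ⟨y, rfl⟩ := Quotient.exists_rep b
  have hh : outerF x = outerF y := h
  have hx1 : ‖(x : E4)‖ = 1 := by
    have := x.2; rwa [mem_sphere_iff_norm, sub_zero] at this
  have hxne : (x : E4) ≠ 0 := by
    intro h0; rw [h0, norm_zero] at hx1; norm_num at hx1
  have hex : ∃ i, (x : E4) i ≠ 0 := by
    by_contra hc
    push_neg at hc
    exact hxne (by ext j; exact hc j)
  obtain ⟨i, hi⟩ := hex
  have hii : (x : E4) i * (x : E4) i = (y : E4) i * (y : E4) i := congrFun (congrFun hh i) i
  have hfac : ((x : E4) i - (y : E4) i) * ((x : E4) i + (y : E4) i) = 0 := by ring_nf; nlinarith [hii]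
  apply Quotient.sound
  rcases mul_eq_zero.mp hfac with hcase | hcase
  · left
    have hyi : (y : E4) i = (x : E4) i := by linarith [sub_eq_zero.mp hcase]
    ext j
    have hij : (x : E4) i * (x : E4) j = (y : E4) i * (y : E4) j := congrFun (congrFun hh i) j
    rw [hyi] at hij
    exact mul_left_cancel₀ hi hij
  · right
    have hyi : (y : E4) i = -(x : E4) i := by linarith
    have hyine : (x : E4) i ≠ 0 := hi
    ext j
    have hij : (x : E4) i * (x : E4) j = (y : E4) i * (y : E4) j := congrFun (congrFun hh i) j
    rw [hyi] at hij
    have : (x : E4) i * (x : E4) j = (x : E4) i * (-(y : E4) j) := by linarith [hij]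
    simpa using mul_left_cancel₀ hi this

instance : T2Space (RP 3) :=
  T2Space.of_injective_continuous outerQ_injective
    (continuous_outerF.quotient_lift _)

/-! ### The subspace L of the ball -/

instance : CompactSpace UBall3 :=
  isCompact_iff_compactSpace.mp (isCompact_closedBall _ _)

def LS : Set UBall3 := {x | ((x : E3) 0)^2 + ((x : E3) 1)^2 ≤ 1/4}

abbrev LT := ↥LS

lemma isClosed_LS : IsClosed LS := by
  have : Continuous (fun x : UBall3 => ((x : E3) 0)^2 + ((x : E3) 1)^2) := by
    exact (((continuous_apply_E3 0).comp continuous_subtype_val).pow 2).add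
      (((continuous_apply_E3 1).comp continuous_subtype_val).pow 2)
  exact isClosed_le this continuous_const

instance : CompactSpace LT :=
  isCompact_iff_compactSpace.mp (isClosed_LS.isCompact)

/-! ### basic quantities -/

def rsq (x : E3) : ℝ := (x 0)^2 + (x 1)^2
def wd (x : E3) : ℝ := Real.sqrt (1 - rsq x)
def uu (x : E3) : ℝ := x 2 / wd x
def th (x : E3) : ℝ := π * (uu x + 1) / 2

variable {x : LT}

lemma ball_normsq_le (x : LT) : ‖((x : UBall3) : E3)‖^2 ≤ 1 := by
  have := (x : UBall3).2
  rw [mem_closedBall, dist_zero_right] at this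
  nlinarith [norm_nonneg ((x : UBall3) : E3)]

lemma rsq_le (x : LT) : rsq ((x : UBall3) : E3) ≤ 1/4 := x.2

lemma wd_pos (x : LT) : 0 < wd ((x : UBall3) : E3) := by
  rw [wd]
  apply Real.sqrt_pos.mpr
  have := rsq_le x
  linarith

lemma wd_sq (x : LT) : wd ((x : UBall3) : E3) ^ 2 = 1 - rsq ((x : UBall3) : E3) := by
  apply Real.sq_sqrt
  have := rsq_le x; linarith

lemma z_eq (x : LT) : ((x : UBall3) : E3) 2 = uu ((x : UBall3) : E3) * wd ((x : UBall3) : E3) := by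
  rw [uu, div_mul_cancel₀]
  exact (wd_pos x).ne'

lemma uu_sq_le (x : LT) : uu ((x : UBall3) : E3) ^ 2 ≤ 1 := by
  set X := ((x : UBall3) : E3)
  have h1 : (X 2)^2 ≤ 1 - rsq X := by
    have := ball_normsq_le x
    rw [normsq3] at this
    simp only [rsq]; nlinarith [this]
  have h2 := wd_pos x
  have h3 := wd_sq x
  rw [uu, div_pow]
  rw [h3]
  rcases eq_or_lt_of_le h1 with h | h
  · rw [div_le_one (by nlinarith)]; linarith
  · rw [div_le_one (by nlinarith)]; linarith

lemma uu_bounds (x : LT) : -1 ≤ uu ((x : UBall3) : E3) ∧ uu ((x : UBall3) : E3) ≤ 1 := by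
  have := uu_sq_le x
  constructor <;> nlinarith

lemma th_mem (x : LT) : th ((x : UBall3) : E3) ∈ Icc (0:ℝ) π := by
  obtain ⟨h1, h2⟩ := uu_bounds x
  have hp := pi_pos
  constructor
  · simp only [th]; nlinarith
  · simp only [th]; nlinarith

lemma sphere_iff_uu (x : LT) :
    ‖((x : UBall3) : E3)‖^2 = 1 ↔ uu ((x : UBall3) : E3) ^ 2 = 1 := by
  set X := ((x : UBall3) : E3)
  have h2 := wd_pos x
  have h3 := wd_sq x
  rw [normsq3]
  rw [uu, div_pow, h3]
  constructor
  · intro h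
    rw [div_eq_one_iff_eq (by nlinarith)]
    simp only [rsq] at *
    nlinarith
  · intro h
    rw [div_eq_one_iff_eq (by nlinarith)] at h
    simp only [rsq] at *
    nlinarith

/-! ### the map F -/

lemma F_circle_mem (x : LT) :
    mk2 (cos (2 * th ((x : UBall3) : E3))) (sin (2 * th ((x : UBall3) : E3)))
      ∈ sphere (0 : E2) 1 := by
  rw [mem_sphere_iff_norm, sub_zero]
  have h : ‖mk2 (cos (2 * th ((x : UBall3) : E3))) (sin (2 * th ((x : UBall3) : E3)))‖^2 = 1 := by
    rw [normsq2, mk2_0, mk2_1]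
    exact cos_sq_add_sin_sq _
  nlinarith [norm_nonneg (mk2 (cos (2 * th ((x : UBall3) : E3))) (sin (2 * th ((x : UBall3) : E3))))]

lemma F_disk_mem (x : LT) :
    mk2 (2 * (((x : UBall3) : E3) 0 * cos (th ((x : UBall3) : E3))
             - ((x : UBall3) : E3) 1 * sin (th ((x : UBall3) : E3))))
        (2 * (((x : UBall3) : E3) 0 * sin (th ((x : UBall3) : E3))
             + ((x : UBall3) : E3) 1 * cos (th ((x : UBall3) : E3))))
      ∈ closedBall (0 : E2) 1 := by
  set X := ((x : UBall3) : E3)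
  set t := th X
  rw [mem_closedBall, dist_zero_right]
  have hpy := sin_sq_add_cos_sq t
  have hr := rsq_le x
  simp only [rsq] at hr
  have h : ‖mk2 (2 * (X 0 * cos t - X 1 * sin t)) (2 * (X 0 * sin t + X 1 * cos t))‖^2 ≤ 1 := by
    rw [normsq2, mk2_0, mk2_1]
    nlinarith [sq_nonneg (X 0), sq_nonneg (X 1)]
  nlinarith [norm_nonneg (mk2 (2 * (X 0 * cos t - X 1 * sin t)) (2 * (X 0 * sin t + X 1 * cos t)))]

def F (x : LT) : USphere 1 × (closedBall (0 : E2) 1 : Set E2) :=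
  (⟨_, F_circle_mem x⟩, ⟨_, F_disk_mem x⟩)

lemma continuous_th : Continuous (fun x : LT => th ((x : UBall3) : E3)) := by
  have hc : ∀ i : Fin 3, Continuous (fun x : LT => ((x : UBall3) : E3) i) := fun i =>
    (continuous_apply_E3 i).comp (continuous_subtype_val.comp continuous_subtype_val)
  have hwd : Continuous (fun x : LT => wd ((x : UBall3) : E3)) := by
    apply Real.continuous_sqrt.comp
    exact continuous_const.sub (((hc 0).pow 2).add ((hc 1).pow 2))
  have huu : Continuous (fun x : LT => uu ((x : UBall3) : E3)) :=
    (hc 2).div hwd (fun x => (wd_pos x).ne')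
  exact (continuous_const.mul (huu.add continuous_const)).div_const 2

lemma continuous_F : Continuous F := by
  have hc : ∀ i : Fin 3, Continuous (fun x : LT => ((x : UBall3) : E3) i) := fun i =>
    (continuous_apply_E3 i).comp (continuous_subtype_val.comp continuous_subtype_val)
  have hth := continuous_th
  apply Continuous.prodMk
  · apply Continuous.subtype_mk
    exact continuous_mk2 (Real.continuous_cos.comp (continuous_const.mul hth))
      (Real.continuous_sin.comp (continuous_const.mul hth))
  · apply Continuous.subtype_mk
    apply continuous_mk2
    · exact continuous_const.mul (((hc 0).mul (Real.continuous_cos.comp hth)).sub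
        ((hc 1).mul (Real.continuous_sin.comp hth)))
    · exact continuous_const.mul (((hc 0).mul (Real.continuous_sin.comp hth)).add
        ((hc 1).mul (Real.continuous_cos.comp hth)))

/-! ### hemiLift coordinates and q3 equality -/

lemma hemiLift_coord (x : E3) (i : Fin 4) (h : (i : ℕ) < 3) :
    hemiLift x i = x ⟨i, h⟩ := by
  simp only [hemiLift, PiLp.toLp_apply]; exact dif_pos h

lemma hemiLift_top (x : E3) (i : Fin 4) (h : ¬ (i : ℕ) < 3) :
    hemiLift x i = Real.sqrt (1 - ‖x‖^2) := by
  simp only [hemiLift, PiLp.toLp_apply]; exact dif_neg h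

lemma q3_eq_cases {x y : UBall3} (h : q3 x = q3 y) :
    (x : E3) = (y : E3) ∨
      (‖(x : E3)‖^2 = 1 ∧ ‖(y : E3)‖^2 = 1 ∧ (x : E3) = -(y : E3)) := by
  have hx1 : ‖(x : E3)‖ ≤ 1 := by
    have := x.2; rwa [mem_closedBall, dist_zero_right] at this
  have hy1 : ‖(y : E3)‖ ≤ 1 := by
    have := y.2; rwa [mem_closedBall, dist_zero_right] at this
  rcases Quotient.exact h with h' | h'
  · left
    have h'' : hemiLift (x : E3) = hemiLift (y : E3) := h'
    ext i
    have := congrFun (congrArg WithLp.ofLp h'') ⟨(i : ℕ), by omega⟩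
    rw [hemiLift_coord _ _ (by simp [i.isLt]), hemiLift_coord _ _ (by simp [i.isLt])] at this
    simpa using this
  · right
    have h'' : hemiLift (x : E3) = -hemiLift (y : E3) := h'
    have h3 := congrFun (congrArg WithLp.ofLp h'') 3
    rw [hemiLift_top _ 3 (by decide), PiLp.neg_apply,
      hemiLift_top _ 3 (by decide)] at h3
    have hxs : Real.sqrt (1 - ‖(x : E3)‖^2) = 0 := by
      have h1 := Real.sqrt_nonneg (1 - ‖(x : E3)‖^2)
      have h2 := Real.sqrt_nonneg (1 - ‖(y : E3)‖^2)
      linarith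
    have hys : Real.sqrt (1 - ‖(y : E3)‖^2) = 0 := by
      have h1 := Real.sqrt_nonneg (1 - ‖(x : E3)‖^2)
      linarith
    have hx2 : ‖(x : E3)‖^2 = 1 := by
      have := Real.sqrt_eq_zero'.mp hxs
      nlinarith [norm_nonneg (x : E3)]
    have hy2 : ‖(y : E3)‖^2 = 1 := by
      have := Real.sqrt_eq_zero'.mp hys
      nlinarith [norm_nonneg (y : E3)]
    refine ⟨hx2, hy2, ?_⟩
    ext i
    have := congrFun (congrArg WithLp.ofLp h'') ⟨(i : ℕ), by omega⟩
    rw [hemiLift_coord _ _ (by simp [i.isLt]), PiLp.neg_apply,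
      hemiLift_coord _ _ (by simp [i.isLt])] at this
    simpa using this

lemma q3_antipodal {x y : UBall3} (hx : ‖(x : E3)‖^2 = 1) (hy : ‖(y : E3)‖^2 = 1)
    (h : (x : E3) = -(y : E3)) : q3 x = q3 y := by
  apply Quotient.sound
  right
  show hemiLift (x : E3) = -(hemiLift (y : E3))
  ext i
  by_cases hi : (i : ℕ) < 3
  · rw [hemiLift_coord _ _ hi, PiLp.neg_apply, hemiLift_coord _ _ hi, h, PiLp.neg_apply]
  · rw [hemiLift_top _ _ hi, PiLp.neg_apply, hemiLift_top _ _ hi, hx, hy]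
    simp

/-! ### helpers about th -/

lemma sin_zero_cases {t : ℝ} (ht : t ∈ Icc (0:ℝ) π) (h : sin t = 0) : t = 0 ∨ t = π := by
  rcases eq_or_lt_of_le ht.1 with h0 | h0
  · exact Or.inl h0.symm
  rcases eq_or_lt_of_le ht.2 with h1 | h1
  · exact Or.inr h1
  exact absurd h (ne_of_gt (sin_pos_of_pos_of_lt_pi h0 h1))

lemma uu_of_th_eq_zero {u : ℝ} (h : π * (u + 1) / 2 = 0) : u = -1 := by
  have h2 : π * (u + 1) = 0 := by linarith
  rcases mul_eq_zero.mp h2 with h' | h'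
  · exact absurd h' pi_ne_zero
  · linarith

lemma uu_of_th_eq_pi {u : ℝ} (h : π * (u + 1) / 2 = π) : u = 1 := by
  have h2 : π * (u - 1) = 0 := by linarith
  rcases mul_eq_zero.mp h2 with h' | h'
  · exact absurd h' pi_ne_zero
  · linarith

lemma th_inj {u v : ℝ} (h : π * (u + 1) / 2 = π * (v + 1) / 2) : u = v := by
  have h2 : π * (u - v) = 0 := by linarith
  rcases mul_eq_zero.mp h2 with h' | h'
  · exact absurd h' pi_ne_zero
  · linarith

/-! ### key properties of F -/

lemma X_eq_neg_Y {x y : LT} (h0 : ((x:UBall3):E3) 0 = -((y:UBall3):E3) 0)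
    (h1 : ((x:UBall3):E3) 1 = -((y:UBall3):E3) 1)
    (h2 : ((x:UBall3):E3) 2 = -((y:UBall3):E3) 2) :
    ((x:UBall3):E3) = -((y:UBall3):E3) := by
  ext i
  fin_cases i
  · rw [PiLp.neg_apply]; exact h0
  · rw [PiLp.neg_apply]; exact h1
  · rw [PiLp.neg_apply]; exact h2

lemma eq_core {x y : LT} (hth : th ((x:UBall3):E3) = th ((y:UBall3):E3))
    (hd1 : 2 * (((x:UBall3):E3) 0 * cos (th ((x:UBall3):E3))
            - ((x:UBall3):E3) 1 * sin (th ((x:UBall3):E3)))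
         = 2 * (((y:UBall3):E3) 0 * cos (th ((y:UBall3):E3))
            - ((y:UBall3):E3) 1 * sin (th ((y:UBall3):E3))))
    (hd2 : 2 * (((x:UBall3):E3) 0 * sin (th ((x:UBall3):E3))
            + ((x:UBall3):E3) 1 * cos (th ((x:UBall3):E3)))
         = 2 * (((y:UBall3):E3) 0 * sin (th ((y:UBall3):E3))
            + ((y:UBall3):E3) 1 * cos (th ((y:UBall3):E3)))) :
    x = y := by
  set X := ((x:UBall3):E3) with hX
  set Y := ((y:UBall3):E3) with hY
  rw [← hth] at hd1 hd2
  have hpy := sin_sq_add_cos_sq (th X)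
  have e0 : X 0 = Y 0 := by
    linear_combination (cos (th X) / 2) * hd1 + (sin (th X) / 2) * hd2
      - (X 0 - Y 0) * hpy
  have e1 : X 1 = Y 1 := by
    linear_combination (- sin (th X) / 2) * hd1 + (cos (th X) / 2) * hd2
      - (X 1 - Y 1) * hpy
  have euv : uu X = uu Y := th_inj hth
  have hwd : wd X = wd Y := by unfold wd rsq; rw [e0, e1]
  have hz1 := z_eq x
  have hz2 := z_eq y
  rw [← hX] at hz1
  rw [← hY] at hz2
  have e2 : X 2 = Y 2 := by rw [hz1, hz2, euv, hwd]
  apply Subtype.ext; apply Subtype.ext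
  show X = Y
  ext i
  fin_cases i
  · exact e0
  · exact e1
  · exact e2

lemma F_antipodal_case {x y : LT}
    (hx1 : ‖((x:UBall3):E3)‖^2 = 1) (hy1 : ‖((y:UBall3):E3)‖^2 = 1)
    (hneg : ((x:UBall3):E3) = -((y:UBall3):E3)) : F x = F y := by
  set X := ((x:UBall3):E3) with hX
  set Y := ((y:UBall3):E3) with hY
  have h0 : X 0 = -(Y 0) := by rw [hneg, PiLp.neg_apply]
  have h1 : X 1 = -(Y 1) := by rw [hneg, PiLp.neg_apply]
  have h2 : X 2 = -(Y 2) := by rw [hneg, PiLp.neg_apply]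
  have hrsq : rsq X = rsq Y := by unfold rsq; rw [h0, h1]; ring
  have hwd : wd X = wd Y := by unfold wd; rw [hrsq]
  have huu : uu X = -(uu Y) := by unfold uu; rw [h2, hwd, neg_div]
  have huy : uu Y ^ 2 = 1 := (sphere_iff_uu y).mp hy1
  have hcases : uu Y = 1 ∨ uu Y = -1 := by
    have : (uu Y - 1) * (uu Y + 1) = 0 := by nlinarith
    rcases mul_eq_zero.mp this with h | h
    · left; linarith
    · right; linarith
  have key : ∀ (tx ty : ℝ), th X = tx → th Y = ty →
      cos (2*tx) = cos (2*ty) → sin (2*tx) = sin (2*ty) →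
      2 * (X 0 * cos tx - X 1 * sin tx) = 2 * (Y 0 * cos ty - Y 1 * sin ty) →
      2 * (X 0 * sin tx + X 1 * cos tx) = 2 * (Y 0 * sin ty + Y 1 * cos ty) →
      F x = F y := by
    intro tx ty htx hty hc hs hh1 hh2
    apply Prod.ext_iff.mpr
    constructor
    · apply Subtype.ext
      show mk2 (cos (2 * th X)) (sin (2 * th X)) = mk2 (cos (2 * th Y)) (sin (2 * th Y))
      rw [htx, hty, hc, hs]
    · apply Subtype.ext
      show mk2 (2 * (X 0 * cos (th X) - X 1 * sin (th X)))
             (2 * (X 0 * sin (th X) + X 1 * cos (th X)))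
         = mk2 (2 * (Y 0 * cos (th Y) - Y 1 * sin (th Y)))
             (2 * (Y 0 * sin (th Y) + Y 1 * cos (th Y)))
      rw [htx, hty, hh1, hh2]
  rcases hcases with hu | hu
  · have htY : th Y = π := by rw [th, hu]; ring
    have htX : th X = 0 := by rw [th, huu, hu]; ring
    refine key 0 π htX htY ?_ ?_ ?_ ?_
    · rw [mul_zero, Real.cos_zero, Real.cos_two_pi]
    · rw [mul_zero, Real.sin_zero, Real.sin_two_pi]
    · rw [Real.cos_zero, Real.sin_zero, Real.cos_pi, Real.sin_pi, h0, h1]; ring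
    · rw [Real.cos_zero, Real.sin_zero, Real.cos_pi, Real.sin_pi, h0, h1]; ring
  · have htY : th Y = 0 := by rw [th, hu]; ring
    have htX : th X = π := by rw [th, huu, hu]; ring
    refine key π 0 htX htY ?_ ?_ ?_ ?_
    · rw [mul_zero, Real.cos_zero, Real.cos_two_pi]
    · rw [mul_zero, Real.sin_zero, Real.sin_two_pi]
    · rw [Real.cos_zero, Real.sin_zero, Real.cos_pi, Real.sin_pi, h0, h1]; ring
    · rw [Real.cos_zero, Real.sin_zero, Real.cos_pi, Real.sin_pi, h0, h1]; ring

lemma F_descends {x y : LT} (h : q3 (x : UBall3) = q3 (y : UBall3)) : F x = F y := by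
  rcases q3_eq_cases h with h' | ⟨hx1, hy1, h'⟩
  · have : x = y := Subtype.ext (Subtype.ext h')
    rw [this]
  · exact F_antipodal_case hx1 hy1 h'

lemma F_inj {x y : LT} (h : F x = F y) : q3 (x : UBall3) = q3 (y : UBall3) := by
  set X := ((x:UBall3):E3) with hX
  set Y := ((y:UBall3):E3) with hY
  have hcirc : (((F x).1 : USphere 1) : E2) = (((F y).1 : USphere 1) : E2) := by rw [h]
  have hdisk : (((F x).2 : (closedBall (0:E2) 1 : Set E2)) : E2)
      = (((F y).2 : (closedBall (0:E2) 1 : Set E2)) : E2) := by rw [h]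
  have hc1 : cos (2 * th X) = cos (2 * th Y) := congrFun (congrArg WithLp.ofLp hcirc) 0
  have hc2 : sin (2 * th X) = sin (2 * th Y) := congrFun (congrArg WithLp.ofLp hcirc) 1
  have hd1 : 2 * (X 0 * cos (th X) - X 1 * sin (th X))
           = 2 * (Y 0 * cos (th Y) - Y 1 * sin (th Y)) := congrFun (congrArg WithLp.ofLp hdisk) 0
  have hd2 : 2 * (X 0 * sin (th X) + X 1 * cos (th X))
           = 2 * (Y 0 * sin (th Y) + Y 1 * cos (th Y)) := congrFun (congrArg WithLp.ofLp hdisk) 1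
  have htmX := th_mem x
  have htmY := th_mem y
  rw [← hX] at htmX
  rw [← hY] at htmY
  have hsnX : 0 ≤ sin (th X) := sin_nonneg_of_nonneg_of_le_pi htmX.1 htmX.2
  have hsnY : 0 ≤ sin (th Y) := sin_nonneg_of_nonneg_of_le_pi htmY.1 htmY.2
  have hcsq : cos (th X)^2 = cos (th Y)^2 := by
    have e1 := Real.cos_two_mul (th X)
    have e2 := Real.cos_two_mul (th Y)
    nlinarith [hc1]
  have hssq : sin (th X)^2 = sin (th Y)^2 := by
    have p1 := sin_sq_add_cos_sq (th X)
    have p2 := sin_sq_add_cos_sq (th Y)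
    linarith
  have hsin : sin (th X) = sin (th Y) := by
    rw [← Real.sqrt_sq hsnX, ← Real.sqrt_sq hsnY, hssq]
  by_cases hzero : sin (th X) = 0
  · have hzx := sin_zero_cases htmX hzero
    have hzy := sin_zero_cases htmY (by rw [← hsin]; exact hzero)
    rcases hzx with hx0 | hxp <;> rcases hzy with hy0 | hyp
    · have : x = y := eq_core (by rw [hx0, hy0]) hd1 hd2
      rw [this]
    · -- th X = 0, th Y = π : antipodal
      have hux : uu X = -1 := uu_of_th_eq_zero hx0
      have huy : uu Y = 1 := uu_of_th_eq_pi hyp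
      rw [hx0, hyp, Real.cos_zero, Real.sin_zero, Real.cos_pi, Real.sin_pi] at hd1 hd2
      have e0 : X 0 = -(Y 0) := by linarith
      have e1 : X 1 = -(Y 1) := by linarith
      have hrsq : rsq X = rsq Y := by unfold rsq; rw [e0, e1]; ring
      have hwd : wd X = wd Y := by unfold wd; rw [hrsq]
      have hz1 := z_eq x
      have hz2 := z_eq y
      rw [← hX] at hz1
      rw [← hY] at hz2
      have e2 : X 2 = -(Y 2) := by rw [hz1, hz2, hux, huy, hwd]; ring
      have hx1 : ‖X‖^2 = 1 := (sphere_iff_uu x).mpr (by rw [← hX, hux]; norm_num)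
      have hy1 : ‖Y‖^2 = 1 := (sphere_iff_uu y).mpr (by rw [← hY, huy]; norm_num)
      exact q3_antipodal hx1 hy1 (X_eq_neg_Y e0 e1 e2)
    · -- th X = π, th Y = 0 : antipodal
      have hux : uu X = 1 := uu_of_th_eq_pi hxp
      have huy : uu Y = -1 := uu_of_th_eq_zero hy0
      rw [hxp, hy0, Real.cos_zero, Real.sin_zero, Real.cos_pi, Real.sin_pi] at hd1 hd2
      have e0 : X 0 = -(Y 0) := by linarith
      have e1 : X 1 = -(Y 1) := by linarith
      have hrsq : rsq X = rsq Y := by unfold rsq; rw [e0, e1]; ring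
      have hwd : wd X = wd Y := by unfold wd; rw [hrsq]
      have hz1 := z_eq x
      have hz2 := z_eq y
      rw [← hX] at hz1
      rw [← hY] at hz2
      have e2 : X 2 = -(Y 2) := by rw [hz1, hz2, hux, huy, hwd]; ring
      have hx1 : ‖X‖^2 = 1 := (sphere_iff_uu x).mpr (by rw [← hX, hux]; norm_num)
      have hy1 : ‖Y‖^2 = 1 := (sphere_iff_uu y).mpr (by rw [← hY, huy]; norm_num)
      exact q3_antipodal hx1 hy1 (X_eq_neg_Y e0 e1 e2)
    · have : x = y := eq_core (by rw [hxp, hyp]) hd1 hd2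
      rw [this]
  · have hcos : cos (th X) = cos (th Y) := by
      have e1 := Real.sin_two_mul (th X)
      have e2 := Real.sin_two_mul (th Y)
      have h2 : 2 * sin (th X) * cos (th X) = 2 * sin (th X) * cos (th Y) := by
        rw [← e1, hc2, e2, hsin]
      have := mul_left_cancel₀ (mul_ne_zero two_ne_zero hzero) h2
      exact this
    have hth : th X = th Y := Real.injOn_cos htmX htmY hcos
    have : x = y := eq_core hth hd1 hd2
    rw [this]
set_option maxHeartbeats 2000000 in
lemma F_surj : Function.Surjective F := by
  rintro ⟨s, w⟩
  have hpq : ((s : E2) 0)^2 + ((s : E2) 1)^2 = 1 := circle_sq_sum s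
  set p := (s : E2) 0 with hp
  set q := (s : E2) 1 with hq
  have hw : ((w : E2) 0)^2 + ((w : E2) 1)^2 ≤ 1 := by
    have h1 := w.2
    rw [mem_closedBall, dist_zero_right] at h1
    have h2 := normsq2 (w : E2)
    nlinarith [norm_nonneg (w : E2)]
  set W0 := (w : E2) 0 with hW0
  set W1 := (w : E2) 1 with hW1
  have hp1 : -1 ≤ p := by nlinarith
  have hp2 : p ≤ 1 := by nlinarith
  set φ := if 0 ≤ q then arccos p / 2 else π - arccos p / 2 with hphi
  have hφmem : 0 ≤ φ ∧ φ ≤ π := by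
    have h1 := arccos_nonneg p
    have h2 := arccos_le_pi p
    rw [hphi]
    split_ifs with h <;> constructor <;> linarith
  have hcs : cos (2 * φ) = p ∧ sin (2 * φ) = q := by
    by_cases hq0 : 0 ≤ q
    · rw [hphi, if_pos hq0]
      have h2 : 2 * (arccos p / 2) = arccos p := by ring
      rw [h2, cos_arccos hp1 hp2, sin_arccos]
      refine ⟨rfl, ?_⟩
      rw [show 1 - p^2 = q^2 by linarith]
      exact Real.sqrt_sq hq0
    · push_neg at hq0
      rw [hphi, if_neg (not_le.mpr hq0)]
      have h2 : 2 * (π - arccos p / 2) = 2 * π - arccos p := by ring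
      rw [h2, Real.cos_two_pi_sub, Real.sin_two_pi_sub, cos_arccos hp1 hp2, sin_arccos]
      refine ⟨rfl, ?_⟩
      rw [show 1 - p^2 = (-q)^2 by nlinarith]
      rw [Real.sqrt_sq (by linarith)]
      ring
  set u := 2 * φ / π - 1 with hu
  have hubd : -1 ≤ u ∧ u ≤ 1 := by
    have h1 : 2 * φ / π ≤ 2 := by
      rw [div_le_iff₀ pi_pos]; linarith [hφmem.2]
    have h0 : 0 ≤ 2 * φ / π := div_nonneg (by linarith [hφmem.1]) pi_pos.le
    constructor
    · rw [hu]; linarith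
    · rw [hu]; linarith
  set a := (cos φ * W0 + sin φ * W1) / 2 with ha
  set b := (-sin φ * W0 + cos φ * W1) / 2 with hb
  have hpy := sin_sq_add_cos_sq φ
  have hab : a^2 + b^2 ≤ 1/4 := by
    have key : a^2 + b^2 = (W0^2 + W1^2)/4 := by
      rw [ha, hb]; ring_nf; nlinarith [hpy]
    rw [key]; linarith
  set z := u * Real.sqrt (1 - (a^2 + b^2)) with hz
  have hs2 : Real.sqrt (1 - (a^2 + b^2))^2 = 1 - (a^2 + b^2) :=
    Real.sq_sqrt (by linarith)
  have hz2 : z^2 ≤ 1 - (a^2 + b^2) := by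
    rw [hz, mul_pow, hs2]
    have hu2 : u^2 ≤ 1 := by nlinarith [hubd.1, hubd.2]
    nlinarith [mul_nonneg (by linarith : (0:ℝ) ≤ 1 - u^2)
      (by linarith : (0:ℝ) ≤ 1 - (a^2 + b^2))]
  have hmem : mk3 a b z ∈ closedBall (0 : E3) 1 := by
    rw [mem_closedBall, dist_zero_right]
    have hn := normsq3 (mk3 a b z)
    rw [mk3_0, mk3_1, mk3_2] at hn
    nlinarith [norm_nonneg (mk3 a b z)]
  have hLS : (⟨mk3 a b z, hmem⟩ : UBall3) ∈ LS := by
    show ((mk3 a b z : E3) 0)^2 + ((mk3 a b z : E3) 1)^2 ≤ 1/4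
    rw [mk3_0, mk3_1]; exact hab
  refine ⟨⟨⟨mk3 a b z, hmem⟩, hLS⟩, ?_⟩
  set X : E3 := mk3 a b z with hXdef
  have hrsq : rsq X = a^2 + b^2 := by unfold rsq; rw [hXdef, mk3_0, mk3_1]
  have hwdX : wd X = Real.sqrt (1 - (a^2 + b^2)) := by unfold wd; rw [hrsq]
  have hwdpos : 0 < Real.sqrt (1 - (a^2 + b^2)) := Real.sqrt_pos.mpr (by nlinarith)
  have huuX : uu X = u := by
    unfold uu
    rw [hwdX, hXdef, mk3_2, hz]
    exact mul_div_cancel_right₀ u hwdpos.ne'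
  have hthX : th X = φ := by
    unfold th
    rw [huuX, hu]
    field_simp
    ring
  apply Prod.ext_iff.mpr
  constructor
  · apply Subtype.ext
    show mk2 (cos (2 * th X)) (sin (2 * th X)) = (s : E2)
    rw [hthX, hcs.1, hcs.2, hp, hq, mk2_eta]
  · apply Subtype.ext
    show mk2 (2 * (X 0 * cos (th X) - X 1 * sin (th X)))
           (2 * (X 0 * sin (th X) + X 1 * cos (th X))) = (w : E2)
    rw [hthX, hXdef, mk3_0, mk3_1]
    rw [← mk2_eta (w : E2), ← hW0, ← hW1]
    rw [show 2 * (a * cos φ - b * sin φ) = W0 by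
      rw [ha, hb]; linear_combination W0 * hpy]
    rw [show 2 * (a * sin φ + b * cos φ) = W1 by
      rw [ha, hb]; linear_combination W1 * hpy]

/-! ### assembling the homeomorphism -/

def LSet : Setoid LT := ⟨fun x y => q3 (x : UBall3) = q3 (y : UBall3),
  ⟨fun _ => rfl, fun h => h.symm, fun h1 h2 => h1.trans h2⟩⟩

def QL : Type := Quotient LSet

instance : TopologicalSpace QL := by unfold QL; infer_instance
instance : CompactSpace QL := by unfold QL; exact Quotient.compactSpace

lemma continuous_q3 : Continuous q3 := by
  have h1 : Continuous (fun x : UBall3 => hemiLift (x : E3)) := by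
    have : Continuous (fun x : UBall3 =>
        WithLp.toLp 2 (fun i : Fin 4 => hemiLift (x : E3) i)) := by
      apply (PiLp.continuous_toLp (p := 2) (β := fun _ : Fin 4 => ℝ)).comp
      apply continuous_pi
      intro i
      by_cases hi : (i : ℕ) < 3
      · have : (fun x : UBall3 => hemiLift (x : E3) i)
            = fun x : UBall3 => (x : E3) ⟨(i : ℕ), hi⟩ := by
          funext x; exact hemiLift_coord _ _ hi
        rw [this]
        exact (continuous_apply_E3 _).comp continuous_subtype_val
      · have : (fun x : UBall3 => hemiLift (x : E3) i)
            = fun x : UBall3 => Real.sqrt (1 - ‖(x : E3)‖^2) := by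
          funext x; exact hemiLift_top _ _ hi
        rw [this]
        exact Real.continuous_sqrt.comp
          (continuous_const.sub ((continuous_norm.comp continuous_subtype_val).pow 2))
    exact this
  exact continuous_quot_mk.comp (h1.subtype_mk _)

def q3L : LT → ↥RsetRP := fun x => ⟨q3 (x : UBall3), ⟨(x : UBall3), x.2, rfl⟩⟩

lemma continuous_q3L : Continuous q3L :=
  ((continuous_q3.comp continuous_subtype_val)).subtype_mk _

def phi1 : QL → ↥RsetRP :=
  Quotient.lift q3L (fun _ _ h => Subtype.ext h)

lemma phi1_bij : Function.Bijective phi1 := by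
  constructor
  · intro a b h
    obtain ⟨x, rfl⟩ := Quotient.exists_rep a
    obtain ⟨y, rfl⟩ := Quotient.exists_rep b
    exact Quotient.sound (congrArg Subtype.val h)
  · rintro ⟨pt, x, hx, rfl⟩
    exact ⟨Quotient.mk LSet ⟨x, hx⟩, rfl⟩

def phi2 : QL → USphere 1 × (closedBall (0 : E2) 1 : Set E2) :=
  Quotient.lift F (fun _ _ h => F_descends h)

lemma phi2_bij : Function.Bijective phi2 := by
  constructor
  · intro a b h
    obtain ⟨x, rfl⟩ := Quotient.exists_rep a
    obtain ⟨y, rfl⟩ := Quotient.exists_rep b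
    exact Quotient.sound (F_inj h)
  · intro pt
    obtain ⟨x, hx⟩ := F_surj pt
    exact ⟨Quotient.mk LSet x, hx⟩

def homeo1 : QL ≃ₜ ↥RsetRP :=
  Continuous.homeoOfEquivCompactToT2
    (f := Equiv.ofBijective phi1 phi1_bij)
    (continuous_q3L.quotient_lift _)

def homeo2 : QL ≃ₜ USphere 1 × (closedBall (0 : E2) 1 : Set E2) :=
  Continuous.homeoOfEquivCompactToT2
    (f := Equiv.ofBijective phi2 phi2_bij)
    (continuous_F.quotient_lift _)
end ST
/-- The image `R = q₃(L)` of the cylinder `L = {(x,y,z) ∈ B³ : x² + y² ≤ 1/4}` under the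
quotient map `q₃ : B³ → ℝP³` is a solid torus, i.e. homeomorphic to `S¹ × B²`. -/
theorem R_homeomorphic_to_solid_torus :
    Nonempty (↥RsetRP ≃ₜ
      (USphere 1 ×
        (closedBall (0 : EuclideanSpace ℝ (Fin 2)) 1 : Set (EuclideanSpace ℝ (Fin 2))))) := by
  exact ⟨(ST.homeo1.symm.trans ST.homeo2)⟩
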